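/- Let Y = σ² + Qb² − Pa² and γ*₁,S3 = (−Y + √(Y² + 4σ²Pa²))/(2σ²). Then γ*₁,S3 ≥ Pa²/(σ² + Qb²), i.e., the maximum SINR of the interference-suppression scheme 3 is at least UE1's SINR γ*₁,S1 of the non-cooperative scheme 1 that treats interference as noise. -/

import Mathlib

/-- `γ*₁,S3` is at least the non-cooperative SINR `γ*₁,S1 = P a² / (σ² + Q b²)`. -/
theorem stmt_5 (a b P Q σ2 : ℝ) (ha : 0 < a) (hb : 0 < b) (hP : 0 < P)
    (hQ : 0 < Q) (hσ : 0 < σ2)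
    (Y γS3 : ℝ)
    (hY : Y = σ2 + Q * b ^ 2 - P * a ^ 2)
    (hγ : γS3 = (-Y + Real.sqrt (Y ^ 2 + 4 * σ2 * P * a ^ 2)) / (2 * σ2)) :
    γS3 ≥ P * a ^ 2 / (σ2 + Q * b ^ 2) := by
  have hz : (0:ℝ) < σ2 + Q * b ^ 2 := by positivity
  set c : ℝ := Y + 2 * σ2 * (P * a ^ 2) / (σ2 + Q * b ^ 2) with hc
  have key : c ^ 2 ≤ Y ^ 2 + 4 * σ2 * P * a ^ 2 := by
    rw [hc, hY]
    have h1 : 0 < σ2 + Q * b ^ 2 := hz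
    field_simp
    nlinarith [mul_pos (mul_pos hσ (mul_pos hP (pow_pos ha 2))) (mul_pos hQ (pow_pos hb 2)),
      mul_pos hP (pow_pos ha 2), mul_pos hQ (pow_pos hb 2), sq_nonneg (σ2 + Q * b ^ 2)]
  have hsq : c ≤ Real.sqrt (Y ^ 2 + 4 * σ2 * P * a ^ 2) := by
    calc c ≤ |c| := le_abs_self c
    _ = Real.sqrt (c ^ 2) := (Real.sqrt_sq_eq_abs c).symm
    _ ≤ _ := Real.sqrt_le_sqrt key
  have hsq2 := mul_le_mul_of_nonneg_right hsq hz.le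
  rw [hc] at hsq2
  have hcancel : 2 * σ2 * (P * a ^ 2) / (σ2 + Q * b ^ 2) * (σ2 + Q * b ^ 2)
      = 2 * σ2 * (P * a ^ 2) := div_mul_cancel₀ _ hz.ne'
  rw [hγ, ge_iff_le, div_le_div_iff₀ hz (by positivity)]
  nlinarith [hsq2, hcancel]
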